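/- Let V be a finite set, e ⊆ V, and g : 2^e → ℝ≥0 a submodular function with g(∅) = 0. For u, v ∈ V define the minimum directed cut g^{u→v} := min over S ⊆ V with u ∈ S and v ∉ S of g(S ∩ e). Then for every S ⊂ V with S ≠ ∅ and S ≠ V, max over u ∈ S, v ∈ V∖S of g^{u→v} ≤ g(S ∩ e) ≤ ∑ over u ∈ S, v ∈ V∖S of g^{u→v}. -/
import Mathlib


/-- The minimum directed cut of a splitting function `g` on hyperedge `e`
between `u` and `v`: the infimum of `g (S ∩ e)` over sets `S` with `u ∈ S`
and `v ∉ S` (equals `0` by convention when there is no such set). -/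
noncomputable def dirCut {V : Type*} [Fintype V] [DecidableEq V]
    (g : Finset V → ℝ) (e : Finset V) (u v : V) : ℝ :=
  sInf {x : ℝ | ∃ S : Finset V, u ∈ S ∧ v ∉ S ∧ x = g (S ∩ e)}

lemma dirCut_set_finite {V : Type*} [Fintype V] [DecidableEq V]
    (g : Finset V → ℝ) (e : Finset V) (u v : V) :
    {x : ℝ | ∃ S : Finset V, u ∈ S ∧ v ∉ S ∧ x = g (S ∩ e)}.Finite := by
  apply Set.Finite.subset (Set.finite_range (fun S : Finset V => g (S ∩ e)))
  rintro x ⟨S, _, _, rfl⟩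
  exact ⟨S, rfl⟩

lemma dirCut_exists {V : Type*} [Fintype V] [DecidableEq V]
    (g : Finset V → ℝ) (e : Finset V) {u v : V} (h : u ≠ v) :
    ∃ T : Finset V, u ∈ T ∧ v ∉ T ∧ g (T ∩ e) = dirCut g e u v := by
  have hne : {x : ℝ | ∃ S : Finset V, u ∈ S ∧ v ∉ S ∧ x = g (S ∩ e)}.Nonempty :=
    ⟨g ({u} ∩ e), {u}, by simp, by simp [Ne.symm h], rfl⟩
  obtain ⟨T, h1, h2, h3⟩ := hne.csInf_mem (dirCut_set_finite g e u v)
  exact ⟨T, h1, h2, h3.symm⟩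

theorem stmt2 {V : Type*} [Fintype V] [DecidableEq V]
    (e : Finset V) (g : Finset V → ℝ)
    (hg0 : g ∅ = 0)
    (hnn : ∀ S ⊆ e, 0 ≤ g S)
    (hsub : ∀ A ⊆ e, ∀ B ⊆ e, g (A ∪ B) + g (A ∩ B) ≤ g A + g B) :
    ∀ S : Finset V, S ≠ ∅ → S ≠ Finset.univ →
      (∀ u ∈ S, ∀ v ∈ Sᶜ, dirCut g e u v ≤ g (S ∩ e)) ∧
      g (S ∩ e) ≤ ∑ u ∈ S, ∑ v ∈ Sᶜ, dirCut g e u v := by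
  classical
  -- basic subadditivity facts
  have hnn' : ∀ A : Finset V, 0 ≤ g (A ∩ e) := fun A => hnn _ Finset.inter_subset_right
  have hsub_union : ∀ A B : Finset V, g ((A ∪ B) ∩ e) ≤ g (A ∩ e) + g (B ∩ e) := by
    intro A B
    have h := hsub (A ∩ e) Finset.inter_subset_right (B ∩ e) Finset.inter_subset_right
    have h0 : 0 ≤ g ((A ∩ e) ∩ (B ∩ e)) :=
      hnn _ (le_trans Finset.inter_subset_left Finset.inter_subset_right)
    have heq : (A ∪ B) ∩ e = (A ∩ e) ∪ (B ∩ e) := Finset.union_inter_distrib_right A B e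
    rw [heq]; linarith
  have hsub_inter : ∀ A B : Finset V, g ((A ∩ B) ∩ e) ≤ g (A ∩ e) + g (B ∩ e) := by
    intro A B
    have h := hsub (A ∩ e) Finset.inter_subset_right (B ∩ e) Finset.inter_subset_right
    have h0 : 0 ≤ g ((A ∩ e) ∪ (B ∩ e)) := by
      apply hnn
      exact Finset.union_subset Finset.inter_subset_right Finset.inter_subset_right
    have heq : (A ∩ B) ∩ e = (A ∩ e) ∩ (B ∩ e) := by
      ext x; simp only [Finset.mem_inter]; tauto
    rw [heq]; linarith
  -- sup lemma
  have hsup : ∀ (I : Finset V) (f : V → Finset V),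
      g ((I.sup f) ∩ e) ≤ ∑ i ∈ I, g (f i ∩ e) := by
    intro I f
    induction I using Finset.induction_on with
    | empty => simp [hg0]
    | @insert a I ha ih =>
      rw [Finset.sup_insert, Finset.sum_insert ha]
      calc g ((f a ⊔ I.sup f) ∩ e) ≤ g (f a ∩ e) + g ((I.sup f) ∩ e) := hsub_union _ _
        _ ≤ g (f a ∩ e) + ∑ i ∈ I, g (f i ∩ e) := by linarith
  -- inf lemma (nonempty index set)
  have hinf : ∀ (I : Finset V) (f : V → Finset V), I.Nonempty →
      g ((I.inf f) ∩ e) ≤ ∑ i ∈ I, g (f i ∩ e) := by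
    intro I f hI
    induction hI using Finset.Nonempty.cons_induction with
    | singleton a => simp
    | cons a I ha hI ih =>
      rw [Finset.inf_cons, Finset.sum_cons]
      calc g ((f a ⊓ I.inf f) ∩ e) ≤ g (f a ∩ e) + g ((I.inf f) ∩ e) := hsub_inter _ _
        _ ≤ g (f a ∩ e) + ∑ i ∈ I, g (f i ∩ e) := by linarith
  intro S hS0 hSu
  constructor
  · intro u hu v hv
    exact csInf_le (dirCut_set_finite g e u v).bddBelow
      ⟨S, hu, by simpa using hv, rfl⟩
  · -- choose minimizers
    set F : V → V → Finset V := fun u v =>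
      if h : u ≠ v then (dirCut_exists g e h).choose else ∅ with hF
    have hFmem : ∀ u v : V, u ≠ v →
        u ∈ F u v ∧ v ∉ F u v ∧ g (F u v ∩ e) = dirCut g e u v := by
      intro u v h
      simp only [hF, dif_pos h]
      exact (dirCut_exists g e h).choose_spec
    have hScne : Sᶜ.Nonempty := by
      rw [← Finset.card_pos, Finset.card_compl]
      have : S.card < Fintype.card V := by
        apply lt_of_le_of_ne (Finset.card_le_univ S)
        intro h
        exact hSu (Finset.eq_univ_of_card S h)
      omega
    set T : V → Finset V := fun u => Sᶜ.inf (F u) with hT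
    have hne : ∀ u ∈ S, ∀ v ∈ Sᶜ, u ≠ v := by
      intro u hu v hv h
      rw [h] at hu
      exact (Finset.mem_compl.mp hv) hu
    have hmemT : ∀ u ∈ S, u ∈ T u := by
      intro u hu
      have : ({u} : Finset V) ≤ T u := by
        apply Finset.le_inf
        intro v hv
        simpa using (hFmem u v (hne u hu v hv)).1
      exact this (Finset.mem_singleton_self u)
    have hTsub : ∀ u ∈ S, T u ⊆ S := by
      intro u hu x hx
      by_contra hxS
      have hxc : x ∈ Sᶜ := Finset.mem_compl.mpr hxS
      have : T u ≤ F u x := Finset.inf_le hxc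
      exact (hFmem u x (hne u hu x hxc)).2.1 (this hx)
    have hSeq : S = S.sup T := by
      apply le_antisymm
      · intro x hx
        exact (Finset.le_sup (f := T) hx) (hmemT x hx)
      · exact Finset.sup_le hTsub
    calc g (S ∩ e) = g ((S.sup T) ∩ e) := by rw [← hSeq]
      _ ≤ ∑ u ∈ S, g (T u ∩ e) := hsup S T
      _ ≤ ∑ u ∈ S, ∑ v ∈ Sᶜ, g (F u v ∩ e) := by
          apply Finset.sum_le_sum
          intro u hu
          exact hinf Sᶜ (F u) hScne
      _ = ∑ u ∈ S, ∑ v ∈ Sᶜ, dirCut g e u v := by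
          apply Finset.sum_congr rfl
          intro u hu
          apply Finset.sum_congr rfl
          intro v hv
          exact (hFmem u v (hne u hu v hv)).2.2
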